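/- For 0 < μ < 1 and θ_k := arcsin μ, the function φ_e(θ) := 1/(sin²θ − μ²) − 1/(θ² − μ²) has at most one critical point on (θ_k, π/2), and any critical point is a local minimum; consequently φ_e has no local maximum on (θ_k, π/2). -/

import Mathlib

open Real

set_option maxHeartbeats 1000000

private lemma cert_psi (t : ℝ) (ha : (0:ℝ) ≤ t) (hb : t ≤ (1:ℝ)) :
    0 < (64/45) + (-3184/1575)*t + (2048/1701)*t^2 + (-15248/35721)*t^3 + (1404824/13395375)*t^4 + (-51808/2679075)*t^5 + (1312616/468838125)*t^6 + (-4072624/12658629375)*t^7 + (361504/12658629375)*t^8 + (-486464/265831216875)*t^9 + (19456/265831216875)*t^10 + (-1024/797493650625)*t^11 := by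
  have h0 : (0:ℝ) ≤ t := by linarith
  rcases le_or_gt t (1/2:ℝ) with hI0|hI0
  · have pu1 : t^1 ≤ (1/2:ℝ) := by
      calc t^1 ≤ (1/2:ℝ)^1 := by apply pow_le_pow_left₀ h0 (by linarith)
        _ = (1/2:ℝ) := by norm_num
    have pl2 : (0:ℝ) ≤ t^2 := pow_nonneg h0 2
    have pu3 : t^3 ≤ (1/8:ℝ) := by
      calc t^3 ≤ (1/2:ℝ)^3 := by apply pow_le_pow_left₀ h0 (by linarith)
        _ = (1/8:ℝ) := by norm_num
    have pl4 : (0:ℝ) ≤ t^4 := pow_nonneg h0 4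
    have pu5 : t^5 ≤ (1/32:ℝ) := by
      calc t^5 ≤ (1/2:ℝ)^5 := by apply pow_le_pow_left₀ h0 (by linarith)
        _ = (1/32:ℝ) := by norm_num
    have pl6 : (0:ℝ) ≤ t^6 := pow_nonneg h0 6
    have pu7 : t^7 ≤ (1/128:ℝ) := by
      calc t^7 ≤ (1/2:ℝ)^7 := by apply pow_le_pow_left₀ h0 (by linarith)
        _ = (1/128:ℝ) := by norm_num
    have pl8 : (0:ℝ) ≤ t^8 := pow_nonneg h0 8
    have pu9 : t^9 ≤ (1/512:ℝ) := by
      calc t^9 ≤ (1/2:ℝ)^9 := by apply pow_le_pow_left₀ h0 (by linarith)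
        _ = (1/512:ℝ) := by norm_num
    have pl10 : (0:ℝ) ≤ t^10 := pow_nonneg h0 10
    have pu11 : t^11 ≤ (1/2048:ℝ) := by
      calc t^11 ≤ (1/2:ℝ)^11 := by apply pow_le_pow_left₀ h0 (by linarith)
        _ = (1/2048:ℝ) := by norm_num
    linarith only [pu1, pl2, pu3, pl4, pu5, pl6, pu7, pl8, pu9, pl10, pu11]
  rcases le_or_gt t (3/4:ℝ) with hI1|hI1
  · have pu1 : t^1 ≤ (3/4:ℝ) := by
      calc t^1 ≤ (3/4:ℝ)^1 := by apply pow_le_pow_left₀ h0 (by linarith)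
        _ = (3/4:ℝ) := by norm_num
    have pl2 : (1/4:ℝ) ≤ t^2 := by
      calc (1/4:ℝ) = (1/2:ℝ)^2 := by norm_num
        _ ≤ t^2 := by apply pow_le_pow_left₀ (by norm_num) (by linarith)
    have pu3 : t^3 ≤ (27/64:ℝ) := by
      calc t^3 ≤ (3/4:ℝ)^3 := by apply pow_le_pow_left₀ h0 (by linarith)
        _ = (27/64:ℝ) := by norm_num
    have pl4 : (1/16:ℝ) ≤ t^4 := by
      calc (1/16:ℝ) = (1/2:ℝ)^4 := by norm_num
        _ ≤ t^4 := by apply pow_le_pow_left₀ (by norm_num) (by linarith)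
    have pu5 : t^5 ≤ (243/1024:ℝ) := by
      calc t^5 ≤ (3/4:ℝ)^5 := by apply pow_le_pow_left₀ h0 (by linarith)
        _ = (243/1024:ℝ) := by norm_num
    have pl6 : (1/64:ℝ) ≤ t^6 := by
      calc (1/64:ℝ) = (1/2:ℝ)^6 := by norm_num
        _ ≤ t^6 := by apply pow_le_pow_left₀ (by norm_num) (by linarith)
    have pu7 : t^7 ≤ (2187/16384:ℝ) := by
      calc t^7 ≤ (3/4:ℝ)^7 := by apply pow_le_pow_left₀ h0 (by linarith)
        _ = (2187/16384:ℝ) := by norm_num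
    have pl8 : (1/256:ℝ) ≤ t^8 := by
      calc (1/256:ℝ) = (1/2:ℝ)^8 := by norm_num
        _ ≤ t^8 := by apply pow_le_pow_left₀ (by norm_num) (by linarith)
    have pu9 : t^9 ≤ (19683/262144:ℝ) := by
      calc t^9 ≤ (3/4:ℝ)^9 := by apply pow_le_pow_left₀ h0 (by linarith)
        _ = (19683/262144:ℝ) := by norm_num
    have pl10 : (1/1024:ℝ) ≤ t^10 := by
      calc (1/1024:ℝ) = (1/2:ℝ)^10 := by norm_num
        _ ≤ t^10 := by apply pow_le_pow_left₀ (by norm_num) (by linarith)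
    have pu11 : t^11 ≤ (177147/4194304:ℝ) := by
      calc t^11 ≤ (3/4:ℝ)^11 := by apply pow_le_pow_left₀ h0 (by linarith)
        _ = (177147/4194304:ℝ) := by norm_num
    linarith only [pu1, pl2, pu3, pl4, pu5, pl6, pu7, pl8, pu9, pl10, pu11]
  rcases le_or_gt t (7/8:ℝ) with hI2|hI2
  · have pu1 : t^1 ≤ (7/8:ℝ) := by
      calc t^1 ≤ (7/8:ℝ)^1 := by apply pow_le_pow_left₀ h0 (by linarith)
        _ = (7/8:ℝ) := by norm_num
    have pl2 : (9/16:ℝ) ≤ t^2 := by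
      calc (9/16:ℝ) = (3/4:ℝ)^2 := by norm_num
        _ ≤ t^2 := by apply pow_le_pow_left₀ (by norm_num) (by linarith)
    have pu3 : t^3 ≤ (343/512:ℝ) := by
      calc t^3 ≤ (7/8:ℝ)^3 := by apply pow_le_pow_left₀ h0 (by linarith)
        _ = (343/512:ℝ) := by norm_num
    have pl4 : (81/256:ℝ) ≤ t^4 := by
      calc (81/256:ℝ) = (3/4:ℝ)^4 := by norm_num
        _ ≤ t^4 := by apply pow_le_pow_left₀ (by norm_num) (by linarith)
    have pu5 : t^5 ≤ (16807/32768:ℝ) := by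
      calc t^5 ≤ (7/8:ℝ)^5 := by apply pow_le_pow_left₀ h0 (by linarith)
        _ = (16807/32768:ℝ) := by norm_num
    have pl6 : (729/4096:ℝ) ≤ t^6 := by
      calc (729/4096:ℝ) = (3/4:ℝ)^6 := by norm_num
        _ ≤ t^6 := by apply pow_le_pow_left₀ (by norm_num) (by linarith)
    have pu7 : t^7 ≤ (823543/2097152:ℝ) := by
      calc t^7 ≤ (7/8:ℝ)^7 := by apply pow_le_pow_left₀ h0 (by linarith)
        _ = (823543/2097152:ℝ) := by norm_num
    have pl8 : (6561/65536:ℝ) ≤ t^8 := by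
      calc (6561/65536:ℝ) = (3/4:ℝ)^8 := by norm_num
        _ ≤ t^8 := by apply pow_le_pow_left₀ (by norm_num) (by linarith)
    have pu9 : t^9 ≤ (40353607/134217728:ℝ) := by
      calc t^9 ≤ (7/8:ℝ)^9 := by apply pow_le_pow_left₀ h0 (by linarith)
        _ = (40353607/134217728:ℝ) := by norm_num
    have pl10 : (59049/1048576:ℝ) ≤ t^10 := by
      calc (59049/1048576:ℝ) = (3/4:ℝ)^10 := by norm_num
        _ ≤ t^10 := by apply pow_le_pow_left₀ (by norm_num) (by linarith)
    have pu11 : t^11 ≤ (1977326743/8589934592:ℝ) := by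
      calc t^11 ≤ (7/8:ℝ)^11 := by apply pow_le_pow_left₀ h0 (by linarith)
        _ = (1977326743/8589934592:ℝ) := by norm_num
    linarith only [pu1, pl2, pu3, pl4, pu5, pl6, pu7, pl8, pu9, pl10, pu11]
  rcases le_or_gt t (15/16:ℝ) with hI3|hI3
  · have pu1 : t^1 ≤ (15/16:ℝ) := by
      calc t^1 ≤ (15/16:ℝ)^1 := by apply pow_le_pow_left₀ h0 (by linarith)
        _ = (15/16:ℝ) := by norm_num
    have pl2 : (49/64:ℝ) ≤ t^2 := by
      calc (49/64:ℝ) = (7/8:ℝ)^2 := by norm_num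
        _ ≤ t^2 := by apply pow_le_pow_left₀ (by norm_num) (by linarith)
    have pu3 : t^3 ≤ (3375/4096:ℝ) := by
      calc t^3 ≤ (15/16:ℝ)^3 := by apply pow_le_pow_left₀ h0 (by linarith)
        _ = (3375/4096:ℝ) := by norm_num
    have pl4 : (2401/4096:ℝ) ≤ t^4 := by
      calc (2401/4096:ℝ) = (7/8:ℝ)^4 := by norm_num
        _ ≤ t^4 := by apply pow_le_pow_left₀ (by norm_num) (by linarith)
    have pu5 : t^5 ≤ (759375/1048576:ℝ) := by
      calc t^5 ≤ (15/16:ℝ)^5 := by apply pow_le_pow_left₀ h0 (by linarith)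
        _ = (759375/1048576:ℝ) := by norm_num
    have pl6 : (117649/262144:ℝ) ≤ t^6 := by
      calc (117649/262144:ℝ) = (7/8:ℝ)^6 := by norm_num
        _ ≤ t^6 := by apply pow_le_pow_left₀ (by norm_num) (by linarith)
    have pu7 : t^7 ≤ (170859375/268435456:ℝ) := by
      calc t^7 ≤ (15/16:ℝ)^7 := by apply pow_le_pow_left₀ h0 (by linarith)
        _ = (170859375/268435456:ℝ) := by norm_num
    have pl8 : (5764801/16777216:ℝ) ≤ t^8 := by
      calc (5764801/16777216:ℝ) = (7/8:ℝ)^8 := by norm_num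
        _ ≤ t^8 := by apply pow_le_pow_left₀ (by norm_num) (by linarith)
    have pu9 : t^9 ≤ (38443359375/68719476736:ℝ) := by
      calc t^9 ≤ (15/16:ℝ)^9 := by apply pow_le_pow_left₀ h0 (by linarith)
        _ = (38443359375/68719476736:ℝ) := by norm_num
    have pl10 : (282475249/1073741824:ℝ) ≤ t^10 := by
      calc (282475249/1073741824:ℝ) = (7/8:ℝ)^10 := by norm_num
        _ ≤ t^10 := by apply pow_le_pow_left₀ (by norm_num) (by linarith)
    have pu11 : t^11 ≤ (8649755859375/17592186044416:ℝ) := by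
      calc t^11 ≤ (15/16:ℝ)^11 := by apply pow_le_pow_left₀ h0 (by linarith)
        _ = (8649755859375/17592186044416:ℝ) := by norm_num
    linarith only [pu1, pl2, pu3, pl4, pu5, pl6, pu7, pl8, pu9, pl10, pu11]
  have pu1 : t^1 ≤ (1:ℝ) := by
    calc t^1 ≤ (1:ℝ)^1 := by apply pow_le_pow_left₀ h0 (by linarith)
      _ = (1:ℝ) := by norm_num
  have pl2 : (225/256:ℝ) ≤ t^2 := by
    calc (225/256:ℝ) = (15/16:ℝ)^2 := by norm_num
      _ ≤ t^2 := by apply pow_le_pow_left₀ (by norm_num) (by linarith)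
  have pu3 : t^3 ≤ (1:ℝ) := by
    calc t^3 ≤ (1:ℝ)^3 := by apply pow_le_pow_left₀ h0 (by linarith)
      _ = (1:ℝ) := by norm_num
  have pl4 : (50625/65536:ℝ) ≤ t^4 := by
    calc (50625/65536:ℝ) = (15/16:ℝ)^4 := by norm_num
      _ ≤ t^4 := by apply pow_le_pow_left₀ (by norm_num) (by linarith)
  have pu5 : t^5 ≤ (1:ℝ) := by
    calc t^5 ≤ (1:ℝ)^5 := by apply pow_le_pow_left₀ h0 (by linarith)
      _ = (1:ℝ) := by norm_num
  have pl6 : (11390625/16777216:ℝ) ≤ t^6 := by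
    calc (11390625/16777216:ℝ) = (15/16:ℝ)^6 := by norm_num
      _ ≤ t^6 := by apply pow_le_pow_left₀ (by norm_num) (by linarith)
  have pu7 : t^7 ≤ (1:ℝ) := by
    calc t^7 ≤ (1:ℝ)^7 := by apply pow_le_pow_left₀ h0 (by linarith)
      _ = (1:ℝ) := by norm_num
  have pl8 : (2562890625/4294967296:ℝ) ≤ t^8 := by
    calc (2562890625/4294967296:ℝ) = (15/16:ℝ)^8 := by norm_num
      _ ≤ t^8 := by apply pow_le_pow_left₀ (by norm_num) (by linarith)
  have pu9 : t^9 ≤ (1:ℝ) := by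
    calc t^9 ≤ (1:ℝ)^9 := by apply pow_le_pow_left₀ h0 (by linarith)
      _ = (1:ℝ) := by norm_num
  have pl10 : (576650390625/1099511627776:ℝ) ≤ t^10 := by
    calc (576650390625/1099511627776:ℝ) = (15/16:ℝ)^10 := by norm_num
      _ ≤ t^10 := by apply pow_le_pow_left₀ (by norm_num) (by linarith)
  have pu11 : t^11 ≤ (1:ℝ) := by
    calc t^11 ≤ (1:ℝ)^11 := by apply pow_le_pow_left₀ h0 (by linarith)
      _ = (1:ℝ) := by norm_num
  linarith only [pu1, pl2, pu3, pl4, pu5, pl6, pu7, pl8, pu9, pl10, pu11]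

private lemma cert_d2 (t : ℝ) (ha : (1:ℝ) ≤ t) (hb : t ≤ (987/400:ℝ)) :
    0 < (8/135) + (-8/4725)*t + (-8/945)*t^2 + (2084/893025)*t^3 + (-604/4465125)*t^4 + (-64/1913625)*t^5 + (656/93767625)*t^6 + (-128/281302875)*t^7 := by
  have h0 : (0:ℝ) ≤ t := by linarith
  rcases le_or_gt t (267/154:ℝ) with hI0|hI0
  · have pu1 : t^1 ≤ (267/154:ℝ) := by
      calc t^1 ≤ (267/154:ℝ)^1 := by apply pow_le_pow_left₀ h0 (by linarith)
        _ = (267/154:ℝ) := by norm_num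
    have pu2 : t^2 ≤ (71289/23716:ℝ) := by
      calc t^2 ≤ (267/154:ℝ)^2 := by apply pow_le_pow_left₀ h0 (by linarith)
        _ = (71289/23716:ℝ) := by norm_num
    have pl3 : (1:ℝ) ≤ t^3 := by
      calc (1:ℝ) = (1:ℝ)^3 := by norm_num
        _ ≤ t^3 := by apply pow_le_pow_left₀ (by norm_num) (by linarith)
    have pu4 : t^4 ≤ (5082121521/562448656:ℝ) := by
      calc t^4 ≤ (267/154:ℝ)^4 := by apply pow_le_pow_left₀ h0 (by linarith)
        _ = (5082121521/562448656:ℝ) := by norm_num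
    have pu5 : t^5 ≤ (1356926446107/86617093024:ℝ) := by
      calc t^5 ≤ (267/154:ℝ)^5 := by apply pow_le_pow_left₀ h0 (by linarith)
        _ = (1356926446107/86617093024:ℝ) := by norm_num
    have pl6 : (1:ℝ) ≤ t^6 := by
      calc (1:ℝ) = (1:ℝ)^6 := by norm_num
        _ ≤ t^6 := by apply pow_le_pow_left₀ (by norm_num) (by linarith)
    have pu7 : t^7 ≤ (96733929416521923/2054210978157184:ℝ) := by
      calc t^7 ≤ (267/154:ℝ)^7 := by apply pow_le_pow_left₀ h0 (by linarith)
        _ = (96733929416521923/2054210978157184:ℝ) := by norm_num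
    linarith only [pu1, pu2, pl3, pu4, pu5, pl6, pu7]
  have pu1 : t^1 ≤ (987/400:ℝ) := by
    calc t^1 ≤ (987/400:ℝ)^1 := by apply pow_le_pow_left₀ h0 (by linarith)
      _ = (987/400:ℝ) := by norm_num
  have pu2 : t^2 ≤ (974169/160000:ℝ) := by
    calc t^2 ≤ (987/400:ℝ)^2 := by apply pow_le_pow_left₀ h0 (by linarith)
      _ = (974169/160000:ℝ) := by norm_num
  have pl3 : (19034163/3652264:ℝ) ≤ t^3 := by
    calc (19034163/3652264:ℝ) = (267/154:ℝ)^3 := by norm_num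
      _ ≤ t^3 := by apply pow_le_pow_left₀ (by norm_num) (by linarith)
  have pu4 : t^4 ≤ (949005240561/25600000000:ℝ) := by
    calc t^4 ≤ (987/400:ℝ)^4 := by apply pow_le_pow_left₀ h0 (by linarith)
      _ = (949005240561/25600000000:ℝ) := by norm_num
  have pu5 : t^5 ≤ (936668172433707/10240000000000:ℝ) := by
    calc t^5 ≤ (987/400:ℝ)^5 := by apply pow_le_pow_left₀ h0 (by linarith)
      _ = (936668172433707/10240000000000:ℝ) := by norm_num
  have pl6 : (362299361110569/13339032325696:ℝ) ≤ t^6 := by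
    calc (362299361110569/13339032325696:ℝ) = (267/154:ℝ)^6 := by norm_num
      _ ≤ t^6 := by apply pow_le_pow_left₀ (by norm_num) (by linarith)
  have pu7 : t^7 ≤ (912473096871571914483/1638400000000000000:ℝ) := by
    calc t^7 ≤ (987/400:ℝ)^7 := by apply pow_le_pow_left₀ h0 (by linarith)
      _ = (912473096871571914483/1638400000000000000:ℝ) := by norm_num
  linarith only [pu1, pu2, pl3, pu4, pu5, pl6, pu7]

private lemma cert_aloF1 (t : ℝ) (ha : (0:ℝ) ≤ t) (hb : t ≤ (1:ℝ)) :
    0 < (4/3) + (-8/15)*t + (8/105)*t^2 + (-2/315)*t^3 := by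
  have h0 : (0:ℝ) ≤ t := by linarith
  have pu1 : t^1 ≤ (1:ℝ) := by
    calc t^1 ≤ (1:ℝ)^1 := by apply pow_le_pow_left₀ h0 (by linarith)
      _ = (1:ℝ) := by norm_num
  have pl2 : (0:ℝ) ≤ t^2 := pow_nonneg h0 2
  have pu3 : t^3 ≤ (1:ℝ) := by
    calc t^3 ≤ (1:ℝ)^3 := by apply pow_le_pow_left₀ h0 (by linarith)
      _ = (1:ℝ) := by norm_num
  linarith only [pu1, pl2, pu3]

private lemma cert_aloF2 (t : ℝ) (ha : (1:ℝ) ≤ t) (hb : t ≤ (987/400:ℝ)) :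
    0 < (4/3) + (-8/15)*t + (8/105)*t^2 + (-2/315)*t^3 := by
  have h0 : (0:ℝ) ≤ t := by linarith
  rcases le_or_gt t (267/154:ℝ) with hI0|hI0
  · have pu1 : t^1 ≤ (267/154:ℝ) := by
      calc t^1 ≤ (267/154:ℝ)^1 := by apply pow_le_pow_left₀ h0 (by linarith)
        _ = (267/154:ℝ) := by norm_num
    have pl2 : (1:ℝ) ≤ t^2 := by
      calc (1:ℝ) = (1:ℝ)^2 := by norm_num
        _ ≤ t^2 := by apply pow_le_pow_left₀ (by norm_num) (by linarith)
    have pu3 : t^3 ≤ (19034163/3652264:ℝ) := by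
      calc t^3 ≤ (267/154:ℝ)^3 := by apply pow_le_pow_left₀ h0 (by linarith)
        _ = (19034163/3652264:ℝ) := by norm_num
    linarith only [pu1, pl2, pu3]
  have pu1 : t^1 ≤ (987/400:ℝ) := by
    calc t^1 ≤ (987/400:ℝ)^1 := by apply pow_le_pow_left₀ h0 (by linarith)
      _ = (987/400:ℝ) := by norm_num
  have pl2 : (71289/23716:ℝ) ≤ t^2 := by
    calc (71289/23716:ℝ) = (267/154:ℝ)^2 := by norm_num
      _ ≤ t^2 := by apply pow_le_pow_left₀ (by norm_num) (by linarith)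
  have pu3 : t^3 ≤ (961504803/64000000:ℝ) := by
    calc t^3 ≤ (987/400:ℝ)^3 := by apply pow_le_pow_left₀ h0 (by linarith)
      _ = (961504803/64000000:ℝ) := by norm_num
  linarith only [pu1, pl2, pu3]

private lemma cert_kloF (t : ℝ) (ha : (0:ℝ) ≤ t) (hb : t ≤ (1:ℝ)) :
    0 < (16) + (-16)*t + (284/45)*t^2 + (-488/315)*t^3 + (164/675)*t^4 + (-16/675)*t^5 + (16/14175)*t^6 := by
  have h0 : (0:ℝ) ≤ t := by linarith
  rcases le_or_gt t (1/2:ℝ) with hI0|hI0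
  · have pu1 : t^1 ≤ (1/2:ℝ) := by
      calc t^1 ≤ (1/2:ℝ)^1 := by apply pow_le_pow_left₀ h0 (by linarith)
        _ = (1/2:ℝ) := by norm_num
    have pl2 : (0:ℝ) ≤ t^2 := pow_nonneg h0 2
    have pu3 : t^3 ≤ (1/8:ℝ) := by
      calc t^3 ≤ (1/2:ℝ)^3 := by apply pow_le_pow_left₀ h0 (by linarith)
        _ = (1/8:ℝ) := by norm_num
    have pl4 : (0:ℝ) ≤ t^4 := pow_nonneg h0 4
    have pu5 : t^5 ≤ (1/32:ℝ) := by
      calc t^5 ≤ (1/2:ℝ)^5 := by apply pow_le_pow_left₀ h0 (by linarith)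
        _ = (1/32:ℝ) := by norm_num
    have pl6 : (0:ℝ) ≤ t^6 := pow_nonneg h0 6
    linarith only [pu1, pl2, pu3, pl4, pu5, pl6]
  have pu1 : t^1 ≤ (1:ℝ) := by
    calc t^1 ≤ (1:ℝ)^1 := by apply pow_le_pow_left₀ h0 (by linarith)
      _ = (1:ℝ) := by norm_num
  have pl2 : (1/4:ℝ) ≤ t^2 := by
    calc (1/4:ℝ) = (1/2:ℝ)^2 := by norm_num
      _ ≤ t^2 := by apply pow_le_pow_left₀ (by norm_num) (by linarith)
  have pu3 : t^3 ≤ (1:ℝ) := by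
    calc t^3 ≤ (1:ℝ)^3 := by apply pow_le_pow_left₀ h0 (by linarith)
      _ = (1:ℝ) := by norm_num
  have pl4 : (1/16:ℝ) ≤ t^4 := by
    calc (1/16:ℝ) = (1/2:ℝ)^4 := by norm_num
      _ ≤ t^4 := by apply pow_le_pow_left₀ (by norm_num) (by linarith)
  have pu5 : t^5 ≤ (1:ℝ) := by
    calc t^5 ≤ (1:ℝ)^5 := by apply pow_le_pow_left₀ h0 (by linarith)
      _ = (1:ℝ) := by norm_num
  have pl6 : (1/64:ℝ) ≤ t^6 := by
    calc (1/64:ℝ) = (1/2:ℝ)^6 := by norm_num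
      _ ≤ t^6 := by apply pow_le_pow_left₀ (by norm_num) (by linarith)
  linarith only [pu1, pl2, pu3, pl4, pu5, pl6]

private lemma cert_sloF (t : ℝ) (ha : (0:ℝ) ≤ t) (hb : t ≤ (1:ℝ)) :
    0 < (2) + (-4/3)*t + (4/15)*t^2 + (-8/315)*t^3 := by
  have h0 : (0:ℝ) ≤ t := by linarith
  have pu1 : t^1 ≤ (1:ℝ) := by
    calc t^1 ≤ (1:ℝ)^1 := by apply pow_le_pow_left₀ h0 (by linarith)
      _ = (1:ℝ) := by norm_num
  have pl2 : (0:ℝ) ≤ t^2 := pow_nonneg h0 2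
  have pu3 : t^3 ≤ (1:ℝ) := by
    calc t^3 ≤ (1:ℝ)^3 := by apply pow_le_pow_left₀ h0 (by linarith)
      _ = (1:ℝ) := by norm_num
  linarith only [pu1, pl2, pu3]

private lemma cert_t2F (t : ℝ) (ha : (1:ℝ) ≤ t) (hb : t ≤ (987/400:ℝ)) :
    0 < (4) + (-2)*t + (2/5)*t^2 + (-4/105)*t^3 := by
  have h0 : (0:ℝ) ≤ t := by linarith
  rcases le_or_gt t (267/154:ℝ) with hI0|hI0
  · have pu1 : t^1 ≤ (267/154:ℝ) := by
      calc t^1 ≤ (267/154:ℝ)^1 := by apply pow_le_pow_left₀ h0 (by linarith)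
        _ = (267/154:ℝ) := by norm_num
    have pl2 : (1:ℝ) ≤ t^2 := by
      calc (1:ℝ) = (1:ℝ)^2 := by norm_num
        _ ≤ t^2 := by apply pow_le_pow_left₀ (by norm_num) (by linarith)
    have pu3 : t^3 ≤ (19034163/3652264:ℝ) := by
      calc t^3 ≤ (267/154:ℝ)^3 := by apply pow_le_pow_left₀ h0 (by linarith)
        _ = (19034163/3652264:ℝ) := by norm_num
    linarith only [pu1, pl2, pu3]
  rcases le_or_gt t (334/159:ℝ) with hI1|hI1
  · have pu1 : t^1 ≤ (334/159:ℝ) := by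
      calc t^1 ≤ (334/159:ℝ)^1 := by apply pow_le_pow_left₀ h0 (by linarith)
        _ = (334/159:ℝ) := by norm_num
    have pl2 : (71289/23716:ℝ) ≤ t^2 := by
      calc (71289/23716:ℝ) = (267/154:ℝ)^2 := by norm_num
        _ ≤ t^2 := by apply pow_le_pow_left₀ (by norm_num) (by linarith)
    have pu3 : t^3 ≤ (37259704/4019679:ℝ) := by
      calc t^3 ≤ (334/159:ℝ)^3 := by apply pow_le_pow_left₀ h0 (by linarith)
        _ = (37259704/4019679:ℝ) := by norm_num
    linarith only [pu1, pl2, pu3]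
  have pu1 : t^1 ≤ (987/400:ℝ) := by
    calc t^1 ≤ (987/400:ℝ)^1 := by apply pow_le_pow_left₀ h0 (by linarith)
      _ = (987/400:ℝ) := by norm_num
  have pl2 : (111556/25281:ℝ) ≤ t^2 := by
    calc (111556/25281:ℝ) = (334/159:ℝ)^2 := by norm_num
      _ ≤ t^2 := by apply pow_le_pow_left₀ (by norm_num) (by linarith)
  have pu3 : t^3 ≤ (961504803/64000000:ℝ) := by
    calc t^3 ≤ (987/400:ℝ)^3 := by apply pow_le_pow_left₀ h0 (by linarith)
      _ = (961504803/64000000:ℝ) := by norm_num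
  linarith only [pu1, pl2, pu3]


private lemma aux_nonneg {f f' : ℝ → ℝ} (hder : ∀ x, HasDerivAt f (f' x) x)
    (h0 : 0 ≤ f 0) (hpos : ∀ x, 0 < x → 0 ≤ f' x) : ∀ x, 0 ≤ x → 0 ≤ f x := by
  intro x hx
  have hmono : MonotoneOn f (Set.Ici (0:ℝ)) := by
    apply monotoneOn_of_deriv_nonneg (convex_Ici 0)
    · exact fun y _ => (hder y).continuousAt.continuousWithinAt
    · exact fun y _ => (hder y).differentiableAt.differentiableWithinAt
    · intro y hy
      rw [interior_Ici] at hy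
      rw [(hder y).deriv]
      exact hpos y hy
  exact h0.trans (hmono Set.self_mem_Ici hx hx)

private lemma taylor_sc :
    (∀ x : ℝ, 0 ≤ x → Real.sin x ≤ x) ∧
    (∀ x : ℝ, 0 ≤ x → 1 - x^2/2 ≤ Real.cos x) ∧
    (∀ x : ℝ, 0 ≤ x → x - x^3/6 ≤ Real.sin x) ∧
    (∀ x : ℝ, 0 ≤ x → Real.cos x ≤ 1 - x^2/2 + x^4/24) ∧
    (∀ x : ℝ, 0 ≤ x → Real.sin x ≤ x - x^3/6 + x^5/120) ∧
    (∀ x : ℝ, 0 ≤ x → 1 - x^2/2 + x^4/24 - x^6/720 ≤ Real.cos x) ∧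
    (∀ x : ℝ, 0 ≤ x → x - x^3/6 + x^5/120 - x^7/5040 ≤ Real.sin x) ∧
    (∀ x : ℝ, 0 ≤ x → Real.cos x ≤ 1 - x^2/2 + x^4/24 - x^6/720 + x^8/40320) ∧
    (∀ x : ℝ, 0 ≤ x → Real.sin x ≤ x - x^3/6 + x^5/120 - x^7/5040 + x^9/362880) := by
  have d1 : ∀ x : ℝ, HasDerivAt (fun x : ℝ => x - Real.sin x) (1 - Real.cos x) x :=
    fun x => (hasDerivAt_id x).sub (Real.hasDerivAt_sin x)
  have b0 := aux_nonneg d1 (by norm_num) (fun x _ => by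
    have := Real.cos_le_one x; linarith)
  have hb0 : ∀ x : ℝ, 0 ≤ x → Real.sin x ≤ x := fun x hx => by
    have := b0 x hx; linarith
  have d2 : ∀ x : ℝ, HasDerivAt (fun x : ℝ => Real.cos x - (1 - x^2/2)) (x - Real.sin x) x := by
    intro x
    have h := (Real.hasDerivAt_cos x).sub
      ((hasDerivAt_const x (1:ℝ)).sub (((hasDerivAt_id x).pow 2).div_const 2))
    have e : -Real.sin x - (0 - 2 * x ^ (2-1) * 1 / 2) = x - Real.sin x := by
      norm_num; ring
    exact e ▸ (by simpa [Pi.sub_def, Pi.add_def] using h)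
  have b1 := aux_nonneg d2 (by norm_num) (fun x hx => by
    have := hb0 x hx.le; linarith)
  have hb1 : ∀ x : ℝ, 0 ≤ x → 1 - x^2/2 ≤ Real.cos x := fun x hx => by
    have := b1 x hx; linarith
  have d3 : ∀ x : ℝ, HasDerivAt (fun x : ℝ => Real.sin x - (x - x^3/6)) (Real.cos x - (1 - x^2/2)) x := by
    intro x
    have h := (Real.hasDerivAt_sin x).sub
      ((hasDerivAt_id x).sub (((hasDerivAt_id x).pow 3).div_const 6))
    have e : Real.cos x - (1 - 3 * x ^ (3-1) * 1 / 6) = Real.cos x - (1 - x^2/2) := by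
      norm_num; ring
    exact e ▸ (by simpa [Pi.sub_def, Pi.add_def] using h)
  have b2 := aux_nonneg d3 (by norm_num) (fun x hx => by
    have := hb1 x hx.le; linarith)
  have hb2 : ∀ x : ℝ, 0 ≤ x → x - x^3/6 ≤ Real.sin x := fun x hx => by
    have := b2 x hx; linarith
  have d4 : ∀ x : ℝ, HasDerivAt (fun x : ℝ => (1 - x^2/2 + x^4/24) - Real.cos x)
      (Real.sin x - (x - x^3/6)) x := by
    intro x
    have h := (((hasDerivAt_const x (1:ℝ)).sub (((hasDerivAt_id x).pow 2).div_const 2)).add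
      (((hasDerivAt_id x).pow 4).div_const 24)).sub (Real.hasDerivAt_cos x)
    have e : 0 - 2 * x ^ (2-1) * 1 / 2 + 4 * x ^ (4-1) * 1 / 24 - -Real.sin x
        = Real.sin x - (x - x^3/6) := by norm_num; ring
    exact e ▸ (by simpa [Pi.sub_def, Pi.add_def] using h)
  have b3 := aux_nonneg d4 (by norm_num) (fun x hx => by
    have := hb2 x hx.le; linarith)
  have hb3 : ∀ x : ℝ, 0 ≤ x → Real.cos x ≤ 1 - x^2/2 + x^4/24 := fun x hx => by
    have := b3 x hx; linarith
  have d5 : ∀ x : ℝ, HasDerivAt (fun x : ℝ => (x - x^3/6 + x^5/120) - Real.sin x)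
      ((1 - x^2/2 + x^4/24) - Real.cos x) x := by
    intro x
    have h := (((hasDerivAt_id x).sub (((hasDerivAt_id x).pow 3).div_const 6)).add
      (((hasDerivAt_id x).pow 5).div_const 120)).sub (Real.hasDerivAt_sin x)
    have e : 1 - 3 * x ^ (3-1) * 1 / 6 + 5 * x ^ (5-1) * 1 / 120 - Real.cos x
        = (1 - x^2/2 + x^4/24) - Real.cos x := by norm_num; ring
    exact e ▸ (by simpa [Pi.sub_def, Pi.add_def] using h)
  have b4 := aux_nonneg d5 (by norm_num) (fun x hx => by
    have := hb3 x hx.le; linarith)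
  have hb4 : ∀ x : ℝ, 0 ≤ x → Real.sin x ≤ x - x^3/6 + x^5/120 := fun x hx => by
    have := b4 x hx; linarith
  have d6 : ∀ x : ℝ, HasDerivAt (fun x : ℝ => Real.cos x - (1 - x^2/2 + x^4/24 - x^6/720))
      ((x - x^3/6 + x^5/120) - Real.sin x) x := by
    intro x
    have h := (Real.hasDerivAt_cos x).sub
      ((((hasDerivAt_const x (1:ℝ)).sub (((hasDerivAt_id x).pow 2).div_const 2)).add
      (((hasDerivAt_id x).pow 4).div_const 24)).sub (((hasDerivAt_id x).pow 6).div_const 720))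
    have e : -Real.sin x - (0 - 2 * x ^ (2-1) * 1 / 2 + 4 * x ^ (4-1) * 1 / 24 - 6 * x ^ (6-1) * 1 / 720)
        = (x - x^3/6 + x^5/120) - Real.sin x := by norm_num; ring
    exact e ▸ (by simpa [Pi.sub_def, Pi.add_def] using h)
  have b5 := aux_nonneg d6 (by norm_num) (fun x hx => by
    have := hb4 x hx.le; linarith)
  have hb5 : ∀ x : ℝ, 0 ≤ x → 1 - x^2/2 + x^4/24 - x^6/720 ≤ Real.cos x := fun x hx => by
    have := b5 x hx; linarith
  have d7 : ∀ x : ℝ, HasDerivAt (fun x : ℝ => Real.sin x - (x - x^3/6 + x^5/120 - x^7/5040))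
      (Real.cos x - (1 - x^2/2 + x^4/24 - x^6/720)) x := by
    intro x
    have h := (Real.hasDerivAt_sin x).sub
      ((((hasDerivAt_id x).sub (((hasDerivAt_id x).pow 3).div_const 6)).add
      (((hasDerivAt_id x).pow 5).div_const 120)).sub (((hasDerivAt_id x).pow 7).div_const 5040))
    have e : Real.cos x - (1 - 3 * x ^ (3-1) * 1 / 6 + 5 * x ^ (5-1) * 1 / 120 - 7 * x ^ (7-1) * 1 / 5040)
        = Real.cos x - (1 - x^2/2 + x^4/24 - x^6/720) := by norm_num; ring
    exact e ▸ (by simpa [Pi.sub_def, Pi.add_def] using h)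
  have b6 := aux_nonneg d7 (by norm_num) (fun x hx => by
    have := hb5 x hx.le; linarith)
  have hb6 : ∀ x : ℝ, 0 ≤ x → x - x^3/6 + x^5/120 - x^7/5040 ≤ Real.sin x := fun x hx => by
    have := b6 x hx; linarith
  have d8 : ∀ x : ℝ, HasDerivAt (fun x : ℝ => (1 - x^2/2 + x^4/24 - x^6/720 + x^8/40320) - Real.cos x)
      (Real.sin x - (x - x^3/6 + x^5/120 - x^7/5040)) x := by
    intro x
    have h := ((((((hasDerivAt_const x (1:ℝ)).sub (((hasDerivAt_id x).pow 2).div_const 2)).add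
      (((hasDerivAt_id x).pow 4).div_const 24)).sub (((hasDerivAt_id x).pow 6).div_const 720)).add
      (((hasDerivAt_id x).pow 8).div_const 40320))).sub (Real.hasDerivAt_cos x)
    have e : 0 - 2 * x ^ (2-1) * 1 / 2 + 4 * x ^ (4-1) * 1 / 24 - 6 * x ^ (6-1) * 1 / 720
        + 8 * x ^ (8-1) * 1 / 40320 - -Real.sin x
        = Real.sin x - (x - x^3/6 + x^5/120 - x^7/5040) := by norm_num; ring
    exact e ▸ (by simpa [Pi.sub_def, Pi.add_def] using h)
  have b7 := aux_nonneg d8 (by norm_num) (fun x hx => by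
    have := hb6 x hx.le; linarith)
  have hb7 : ∀ x : ℝ, 0 ≤ x → Real.cos x ≤ 1 - x^2/2 + x^4/24 - x^6/720 + x^8/40320 := fun x hx => by
    have := b7 x hx; linarith
  have d9 : ∀ x : ℝ, HasDerivAt (fun x : ℝ => (x - x^3/6 + x^5/120 - x^7/5040 + x^9/362880) - Real.sin x)
      ((1 - x^2/2 + x^4/24 - x^6/720 + x^8/40320) - Real.cos x) x := by
    intro x
    have h := ((((((hasDerivAt_id x).sub (((hasDerivAt_id x).pow 3).div_const 6)).add
      (((hasDerivAt_id x).pow 5).div_const 120)).sub (((hasDerivAt_id x).pow 7).div_const 5040)).add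
      (((hasDerivAt_id x).pow 9).div_const 362880))).sub (Real.hasDerivAt_sin x)
    have e : 1 - 3 * x ^ (3-1) * 1 / 6 + 5 * x ^ (5-1) * 1 / 120 - 7 * x ^ (7-1) * 1 / 5040
        + 9 * x ^ (9-1) * 1 / 362880 - Real.cos x
        = (1 - x^2/2 + x^4/24 - x^6/720 + x^8/40320) - Real.cos x := by norm_num; ring
    exact e ▸ (by simpa [Pi.sub_def, Pi.add_def] using h)
  have b8 := aux_nonneg d9 (by norm_num) (fun x hx => by
    have := hb7 x hx.le; linarith)
  have hb8 : ∀ x : ℝ, 0 ≤ x → Real.sin x ≤ x - x^3/6 + x^5/120 - x^7/5040 + x^9/362880 := fun x hx => by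
    have := b8 x hx; linarith
  exact ⟨hb0, hb1, hb2, hb3, hb4, hb5, hb6, hb7, hb8⟩

private lemma crux (θ : ℝ) (h0 : 0 < θ) (h2 : θ < π/2) :
    4*θ*(Real.sin θ*Real.cos θ)*(Real.sqrt θ - Real.sqrt (Real.sin θ*Real.cos θ))^2
      < (Real.sin θ*Real.cos θ - θ*(Real.cos θ^2 - Real.sin θ^2))*(θ^2 - Real.sin θ^2) := by
  have hpi : θ < π := by linarith [Real.pi_pos, h2]
  set s := Real.sin θ with hs_def
  set c := Real.cos θ with hc_def
  have hs : 0 < s := Real.sin_pos_of_pos_of_lt_pi h0 hpi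
  have hc : 0 < c := Real.cos_pos_of_mem_Ioo ⟨by linarith, h2⟩
  have hsc : 0 < s*c := mul_pos hs hc
  have hslt : s < θ := Real.sin_lt h0
  have hc1 : c ≤ 1 := Real.cos_le_one θ
  have hscθ : s*c < θ := by nlinarith
  have hθB : θ < 3927/2500 := by
    have := Real.pi_lt_d6; linarith
  have hcase : θ^2 ≤ 1 ∨ (1 ≤ θ^2 ∧ θ^2 ≤ 987/400) := by
    rcases le_or_gt θ 1 with h|h
    · exact Or.inl (by nlinarith)
    · exact Or.inr ⟨by nlinarith, by nlinarith [sq_nonneg (θ - 3927/2500)]⟩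
  have hWpos : 0 < θ^2 - s^2 := by nlinarith
  set u := Real.sqrt θ with hu_def
  set v := Real.sqrt (s*c) with hv_def
  have hu : u^2 = θ := Real.sq_sqrt h0.le
  have hv : v^2 = s*c := Real.sq_sqrt hsc.le
  have hupos : 0 < u := Real.sqrt_pos.2 h0
  have hvpos : 0 < v := Real.sqrt_pos.2 hsc
  have huv : v < u := Real.sqrt_lt_sqrt hsc.le hscθ
  have h4sc : 4*(s*c) ≤ (u+v)^2 := by
    nlinarith [mul_nonneg (sub_nonneg.2 huv.le) (by linarith : (0:ℝ) ≤ u + 3*v), hv]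
  have hsc_uv : s*c ≤ u*v := by
    have e : u*v = Real.sqrt (θ*(s*c)) := (Real.sqrt_mul h0.le (s*c)).symm
    have h' : Real.sqrt ((s*c)*(s*c)) ≤ Real.sqrt (θ*(s*c)) :=
      Real.sqrt_le_sqrt (mul_le_mul_of_nonneg_right hscθ.le hsc.le)
    rw [Real.sqrt_mul_self hsc.le] at h'
    rw [e]; exact h'
  set S := Real.sin (2*θ) with hS_def
  set C := Real.cos (2*θ) with hC_def
  have hpy : s^2 + c^2 = 1 := Real.sin_sq_add_cos_sq θ
  have hS : S = 2*(s*c) := by rw [hS_def, Real.sin_two_mul]; ring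
  have hC : C = c^2 - s^2 := by rw [hC_def, Real.cos_two_mul]; linarith
  have h2θ : (0:ℝ) ≤ 2*θ := by linarith
  have hSpos : 0 < S := Real.sin_pos_of_pos_of_lt_pi (by linarith) (by linarith)
  obtain ⟨hb0, hb1, hb2, hb3, hb4, hb5, hb6, hb7, hb8⟩ := taylor_sc
  -- Taylor bounds at x = 2θ, converted to θ-polynomials
  have hS1 : (2)*θ + (-4/3)*θ^3 + (4/15)*θ^5 + (-8/315)*θ^7 ≤ S := by
    have h := hb6 (2*θ) h2θ
    have e : 2*θ - (2*θ)^3/6 + (2*θ)^5/120 - (2*θ)^7/5040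
        = (2)*θ + (-4/3)*θ^3 + (4/15)*θ^5 + (-8/315)*θ^7 := by ring
    rw [e] at h; exact h
  have hS2 : S ≤ (2)*θ + (-4/3)*θ^3 + (4/15)*θ^5 + (-8/315)*θ^7 + (4/2835)*θ^9 := by
    have h := hb8 (2*θ) h2θ
    have e : 2*θ - (2*θ)^3/6 + (2*θ)^5/120 - (2*θ)^7/5040 + (2*θ)^9/362880
        = (2)*θ + (-4/3)*θ^3 + (4/15)*θ^5 + (-8/315)*θ^7 + (4/2835)*θ^9 := by ring
    rw [e] at h; exact h
  have hC1' : (1) + (-2)*θ^2 + (2/3)*θ^4 + (-4/45)*θ^6 ≤ C := by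
    have h := hb5 (2*θ) h2θ
    have e : 1 - (2*θ)^2/2 + (2*θ)^4/24 - (2*θ)^6/720
        = (1) + (-2)*θ^2 + (2/3)*θ^4 + (-4/45)*θ^6 := by ring
    rw [e] at h; exact h
  have hC2' : C ≤ (1) + (-2)*θ^2 + (2/3)*θ^4 + (-4/45)*θ^6 + (2/315)*θ^8 := by
    have h := hb7 (2*θ) h2θ
    have e : 1 - (2*θ)^2/2 + (2*θ)^4/24 - (2*θ)^6/720 + (2*θ)^8/40320
        = (1) + (-2)*θ^2 + (2/3)*θ^4 + (-4/45)*θ^6 + (2/315)*θ^8 := by ring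
    rw [e] at h; exact h
  -- main quantities
  set A := s*c - θ*(c^2 - s^2) with hA_def
  set W := θ^2 - s^2 with hW_def
  set D := θ - s*c with hD_def
  have hA : A = S/2 - θ*C := by rw [hA_def, hS, hC]; ring
  have hsq : s^2 = (1 - C)/2 := by rw [hC]; linarith
  have hW : W = θ^2 - (1 - C)/2 := by rw [hW_def, hsq]
  have hD : D = θ - S/2 := by rw [hD_def, hS]; ring
  have hDpos : 0 < D := by rw [hD_def]; linarith only [hscθ]
  have hAlo : (4/3)*θ^3 + (-8/15)*θ^5 + (8/105)*θ^7 + (-2/315)*θ^9 ≤ A := by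
    rw [hA]
    have hmul : θ*C ≤ θ*((1) + (-2)*θ^2 + (2/3)*θ^4 + (-4/45)*θ^6 + (2/315)*θ^8) :=
      mul_le_mul_of_nonneg_left hC2' h0.le
    linarith only [hS1, hmul]
  have hWlo : (1/3)*θ^4 + (-2/45)*θ^6 ≤ W := by
    rw [hW]; linarith only [hC1']
  have hDhi : D ≤ (2/3)*θ^3 + (-2/15)*θ^5 + (4/315)*θ^7 := by
    rw [hD]; linarith only [hS1]
  have eAlo : (4/3)*θ^3 + (-8/15)*θ^5 + (8/105)*θ^7 + (-2/315)*θ^9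
      = θ^3*((4/3) + (-8/15)*(θ^2) + (8/105)*(θ^2)^2 + (-2/315)*(θ^2)^3) := by ring
  have hAloPos : 0 < (4/3)*θ^3 + (-8/15)*θ^5 + (8/105)*θ^7 + (-2/315)*θ^9 := by
    rw [eAlo]
    rcases hcase with ht|⟨ht1, ht2⟩
    · exact mul_pos (pow_pos h0 3) (cert_aloF1 (θ^2) (sq_nonneg θ) ht)
    · exact mul_pos (pow_pos h0 3) (cert_aloF2 (θ^2) ht1 ht2)
  have hApos : 0 < A := lt_of_lt_of_le hAloPos hAlo
  have hWloPos : 0 < (1/3)*θ^4 + (-2/45)*θ^6 := by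
    have e : (1/3)*θ^4 + (-2/45)*θ^6 = θ^4*(1/3 + (-2/45)*θ^2) := by ring
    rw [e]
    apply mul_pos (pow_pos h0 4)
    rcases hcase with ht|⟨ht1, ht2⟩
    · linarith only [ht]
    · linarith only [ht2]
  have hDhiSq : D^2 ≤ ((2/3)*θ^3 + (-2/15)*θ^5 + (4/315)*θ^7)^2 :=
    pow_le_pow_left₀ hDpos.le hDhi 2
  have huv2 : (u-v)^2*(u+v)^2 = D^2 := by
    have e1 : (u-v)^2*(u+v)^2 = (u^2 - v^2)^2 := by ring
    rw [e1, hu, hv, hD_def]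
  rcases hcase with ht|⟨ht1, ht2⟩
  · -- case θ^2 ≤ 1
    have hpsi := cert_psi (θ^2) (sq_nonneg θ) ht
    have hkloF := cert_kloF (θ^2) (sq_nonneg θ) ht
    have hsloF := cert_sloF (θ^2) (sq_nonneg θ) ht
    have hslo0 : 0 ≤ (2)*θ + (-4/3)*θ^3 + (4/15)*θ^5 + (-8/315)*θ^7 := by
      have e : (2)*θ + (-4/3)*θ^3 + (4/15)*θ^5 + (-8/315)*θ^7
          = θ*((2) + (-4/3)*(θ^2) + (4/15)*(θ^2)^2 + (-8/315)*(θ^2)^3) := by ring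
      rw [e]; exact (mul_pos h0 hsloF).le
    set K := 8*(s*c)*(θ+s*c) - D^2 with hK_def
    have hKS : K = 4*S*θ + 2*S^2 - D^2 := by rw [hK_def, hS, hD_def]; ring
    have hKlo : (16)*θ^2 + (-16)*θ^4 + (284/45)*θ^6 + (-488/315)*θ^8 + (164/675)*θ^10
        + (-16/675)*θ^12 + (16/14175)*θ^14 ≤ K := by
      rw [hKS]
      have t1 : ((2)*θ + (-4/3)*θ^3 + (4/15)*θ^5 + (-8/315)*θ^7)*θ ≤ S*θ :=
        mul_le_mul_of_nonneg_right hS1 h0.le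
      have t2 : ((2)*θ + (-4/3)*θ^3 + (4/15)*θ^5 + (-8/315)*θ^7)^2 ≤ S^2 :=
        pow_le_pow_left₀ hslo0 hS1 2
      linarith only [t1, t2, hDhiSq]
    have hKloPos : 0 < (16)*θ^2 + (-16)*θ^4 + (284/45)*θ^6 + (-488/315)*θ^8 + (164/675)*θ^10
        + (-16/675)*θ^12 + (16/14175)*θ^14 := by
      have e : (16)*θ^2 + (-16)*θ^4 + (284/45)*θ^6 + (-488/315)*θ^8 + (164/675)*θ^10
          + (-16/675)*θ^12 + (16/14175)*θ^14
          = θ^2*((16) + (-16)*(θ^2) + (284/45)*(θ^2)^2 + (-488/315)*(θ^2)^3 + (164/675)*(θ^2)^4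
            + (-16/675)*(θ^2)^5 + (16/14175)*(θ^2)^6) := by ring
      rw [e]; exact mul_pos (pow_pos h0 2) hkloF
    have hKpos : 0 < K := lt_of_lt_of_le hKloPos hKlo
    have hMainPoly : 4*θ*((2)*θ + (-4/3)*θ^3 + (4/15)*θ^5 + (-8/315)*θ^7 + (4/2835)*θ^9)^2
          *((2/3)*θ^3 + (-2/15)*θ^5 + (4/315)*θ^7)^2
        < ((4/3)*θ^3 + (-8/15)*θ^5 + (8/105)*θ^7 + (-2/315)*θ^9)
          *((1/3)*θ^4 + (-2/45)*θ^6)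
          *((16)*θ^2 + (-16)*θ^4 + (284/45)*θ^6 + (-488/315)*θ^8 + (164/675)*θ^10
            + (-16/675)*θ^12 + (16/14175)*θ^14) := by
      have hp := mul_pos (pow_pos h0 11) hpsi
      have hp2 : 0 < ((4/3)*θ^3 + (-8/15)*θ^5 + (8/105)*θ^7 + (-2/315)*θ^9)
          *((1/3)*θ^4 + (-2/45)*θ^6)
          *((16)*θ^2 + (-16)*θ^4 + (284/45)*θ^6 + (-488/315)*θ^8 + (164/675)*θ^10
            + (-16/675)*θ^12 + (16/14175)*θ^14)
          - 4*θ*((2)*θ + (-4/3)*θ^3 + (4/15)*θ^5 + (-8/315)*θ^7 + (4/2835)*θ^9)^2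
          *((2/3)*θ^3 + (-2/15)*θ^5 + (4/315)*θ^7)^2 := by
        have e : ((4/3)*θ^3 + (-8/15)*θ^5 + (8/105)*θ^7 + (-2/315)*θ^9)
            *((1/3)*θ^4 + (-2/45)*θ^6)
            *((16)*θ^2 + (-16)*θ^4 + (284/45)*θ^6 + (-488/315)*θ^8 + (164/675)*θ^10
              + (-16/675)*θ^12 + (16/14175)*θ^14)
            - 4*θ*((2)*θ + (-4/3)*θ^3 + (4/15)*θ^5 + (-8/315)*θ^7 + (4/2835)*θ^9)^2
            *((2/3)*θ^3 + (-2/15)*θ^5 + (4/315)*θ^7)^2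
            = θ^11*((64/45) + (-3184/1575)*(θ^2) + (2048/1701)*(θ^2)^2 + (-15248/35721)*(θ^2)^3 + (1404824/13395375)*(θ^2)^4 + (-51808/2679075)*(θ^2)^5 + (1312616/468838125)*(θ^2)^6 + (-4072624/12658629375)*(θ^2)^7 + (361504/12658629375)*(θ^2)^8 + (-486464/265831216875)*(θ^2)^9 + (19456/265831216875)*(θ^2)^10 + (-1024/797493650625)*(θ^2)^11) := by
          ring
        rw [e]; exact hp
      exact sub_pos.mp hp2
    have hprod : ((4/3)*θ^3 + (-8/15)*θ^5 + (8/105)*θ^7 + (-2/315)*θ^9)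
          *((1/3)*θ^4 + (-2/45)*θ^6)
          *((16)*θ^2 + (-16)*θ^4 + (284/45)*θ^6 + (-488/315)*θ^8 + (164/675)*θ^10
            + (-16/675)*θ^12 + (16/14175)*θ^14) ≤ A*W*K := by
      have h1 : ((4/3)*θ^3 + (-8/15)*θ^5 + (8/105)*θ^7 + (-2/315)*θ^9)
          *((1/3)*θ^4 + (-2/45)*θ^6) ≤ A*W :=
        mul_le_mul hAlo hWlo hWloPos.le hApos.le
      exact mul_le_mul h1 hKlo hKloPos.le (mul_pos hApos hWpos).le
    have hRHS : 4*θ*S^2*D^2 ≤ 4*θ*((2)*θ + (-4/3)*θ^3 + (4/15)*θ^5 + (-8/315)*θ^7 + (4/2835)*θ^9)^2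
          *((2/3)*θ^3 + (-2/15)*θ^5 + (4/315)*θ^7)^2 := by
      have t2 : S^2 ≤ ((2)*θ + (-4/3)*θ^3 + (4/15)*θ^5 + (-8/315)*θ^7 + (4/2835)*θ^9)^2 :=
        pow_le_pow_left₀ hSpos.le hS2 2
      have t4 : S^2*D^2 ≤ ((2)*θ + (-4/3)*θ^3 + (4/15)*θ^5 + (-8/315)*θ^7 + (4/2835)*θ^9)^2
          *((2/3)*θ^3 + (-2/15)*θ^5 + (4/315)*θ^7)^2 :=
        mul_le_mul t2 hDhiSq (sq_nonneg D) (sq_nonneg _)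
      linarith only [mul_le_mul_of_nonneg_left t4 (by linarith only [h0] : (0:ℝ) ≤ 4*θ)]
    have hbig : 16*θ*(s*c)^2*D^2 < A*W*K := by
      have e : 16*θ*(s*c)^2*D^2 = 4*θ*S^2*D^2 := by rw [hS]; ring
      rw [e]
      calc 4*θ*S^2*D^2 ≤ _ := hRHS
        _ < _ := hMainPoly
        _ ≤ A*W*K := hprod
    have hstep2 : K ≤ 4*(s*c)*(u+v)^2 := by
      have hstep1 : (u-v)^2*(4*(s*c)) ≤ D^2 := by
        calc (u-v)^2*(4*(s*c)) ≤ (u-v)^2*(u+v)^2 :=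
              mul_le_mul_of_nonneg_left h4sc (sq_nonneg (u-v))
          _ = D^2 := huv2
      have e : (u-v)^2 = θ + s*c - 2*(u*v) := by
        have e' : (u-v)^2 = u^2 + v^2 - 2*(u*v) := by ring
        rw [e', hu, hv]
      have e2 : (u+v)^2 = θ + s*c + 2*(u*v) := by
        have e' : (u+v)^2 = u^2 + v^2 + 2*(u*v) := by ring
        rw [e', hu, hv]
      rw [hK_def]; rw [e] at hstep1; rw [e2]; linarith only [hstep1]
    have hfin : (u-v)^2*K ≤ 4*(s*c)*D^2 := by
      calc (u-v)^2*K ≤ (u-v)^2*(4*(s*c)*(u+v)^2) :=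
            mul_le_mul_of_nonneg_left hstep2 (sq_nonneg (u-v))
        _ = 4*(s*c)*((u-v)^2*(u+v)^2) := by ring
        _ = 4*(s*c)*D^2 := by rw [huv2]
    have hfinal : (4*θ*(s*c)*(u-v)^2)*K < (A*W)*K := by
      calc (4*θ*(s*c)*(u-v)^2)*K = (4*θ*(s*c))*((u-v)^2*K) := by ring
        _ ≤ (4*θ*(s*c))*(4*(s*c)*D^2) := mul_le_mul_of_nonneg_left hfin
              (mul_nonneg (by linarith only [h0] : (0:ℝ) ≤ 4*θ) hsc.le)
        _ = 16*θ*(s*c)^2*D^2 := by ring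
        _ < A*W*K := hbig
        _ = (A*W)*K := by ring
    exact lt_of_mul_lt_mul_right hfinal hKpos.le
  · -- case 1 ≤ θ^2
    have hd2 := cert_d2 (θ^2) ht1 ht2
    have ht2F := cert_t2F (θ^2) ht1 ht2
    have hT2Pos : 0 < (4)*θ + (-2)*θ^3 + (2/5)*θ^5 + (-4/105)*θ^7 := by
      have e : (4)*θ + (-2)*θ^3 + (2/5)*θ^5 + (-4/105)*θ^7
          = θ*((4) + (-2)*(θ^2) + (2/5)*(θ^2)^2 + (-4/105)*(θ^2)^3) := by ring
      rw [e]; exact mul_pos h0 ht2F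
    have hT2le : (4)*θ + (-2)*θ^3 + (2/5)*θ^5 + (-4/105)*θ^7 ≤ θ + 3*(s*c) := by
      have e : s*c = S/2 := by rw [hS]; ring
      rw [e]; linarith only [hS1]
    have hT3Pos : 0 < θ + 3*(s*c) := by linarith only [h0, hsc]
    have hMainPoly : 2*θ*((2)*θ + (-4/3)*θ^3 + (4/15)*θ^5 + (-8/315)*θ^7 + (4/2835)*θ^9)
          *((2/3)*θ^3 + (-2/15)*θ^5 + (4/315)*θ^7)^2
        < ((4/3)*θ^3 + (-8/15)*θ^5 + (8/105)*θ^7 + (-2/315)*θ^9)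
          *((1/3)*θ^4 + (-2/45)*θ^6)
          *((4)*θ + (-2)*θ^3 + (2/5)*θ^5 + (-4/105)*θ^7) := by
      have hp := mul_pos (pow_pos h0 10) hd2
      have hp2 : 0 < ((4/3)*θ^3 + (-8/15)*θ^5 + (8/105)*θ^7 + (-2/315)*θ^9)
          *((1/3)*θ^4 + (-2/45)*θ^6)
          *((4)*θ + (-2)*θ^3 + (2/5)*θ^5 + (-4/105)*θ^7)
          - 2*θ*((2)*θ + (-4/3)*θ^3 + (4/15)*θ^5 + (-8/315)*θ^7 + (4/2835)*θ^9)
          *((2/3)*θ^3 + (-2/15)*θ^5 + (4/315)*θ^7)^2 := by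
        have e : ((4/3)*θ^3 + (-8/15)*θ^5 + (8/105)*θ^7 + (-2/315)*θ^9)
            *((1/3)*θ^4 + (-2/45)*θ^6)
            *((4)*θ + (-2)*θ^3 + (2/5)*θ^5 + (-4/105)*θ^7)
            - 2*θ*((2)*θ + (-4/3)*θ^3 + (4/15)*θ^5 + (-8/315)*θ^7 + (4/2835)*θ^9)
            *((2/3)*θ^3 + (-2/15)*θ^5 + (4/315)*θ^7)^2
            = θ^10*((8/135) + (-8/4725)*(θ^2) + (-8/945)*(θ^2)^2 + (2084/893025)*(θ^2)^3 + (-604/4465125)*(θ^2)^4 + (-64/1913625)*(θ^2)^5 + (656/93767625)*(θ^2)^6 + (-128/281302875)*(θ^2)^7) := by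
          ring
        rw [e]; exact hp
      exact sub_pos.mp hp2
    have hprod : ((4/3)*θ^3 + (-8/15)*θ^5 + (8/105)*θ^7 + (-2/315)*θ^9)
          *((1/3)*θ^4 + (-2/45)*θ^6)
          *((4)*θ + (-2)*θ^3 + (2/5)*θ^5 + (-4/105)*θ^7) ≤ A*W*(θ+3*(s*c)) := by
      have h1 : ((4/3)*θ^3 + (-8/15)*θ^5 + (8/105)*θ^7 + (-2/315)*θ^9)
          *((1/3)*θ^4 + (-2/45)*θ^6) ≤ A*W :=
        mul_le_mul hAlo hWlo hWloPos.le hApos.le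
      exact mul_le_mul h1 hT2le hT2Pos.le (mul_pos hApos hWpos).le
    have hshiPos : 0 < (2)*θ + (-4/3)*θ^3 + (4/15)*θ^5 + (-8/315)*θ^7 + (4/2835)*θ^9 :=
      lt_of_lt_of_le hSpos hS2
    have hRHS : 2*θ*S*D^2 ≤ 2*θ*((2)*θ + (-4/3)*θ^3 + (4/15)*θ^5 + (-8/315)*θ^7 + (4/2835)*θ^9)
          *((2/3)*θ^3 + (-2/15)*θ^5 + (4/315)*θ^7)^2 := by
      have t4 : S*D^2 ≤ ((2)*θ + (-4/3)*θ^3 + (4/15)*θ^5 + (-8/315)*θ^7 + (4/2835)*θ^9)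
          *((2/3)*θ^3 + (-2/15)*θ^5 + (4/315)*θ^7)^2 :=
        mul_le_mul hS2 hDhiSq (sq_nonneg D) hshiPos.le
      linarith only [mul_le_mul_of_nonneg_left t4 (by linarith only [h0] : (0:ℝ) ≤ 2*θ)]
    have hbig : 4*θ*(s*c)*D^2 < A*W*(θ+3*(s*c)) := by
      have e : 4*θ*(s*c)*D^2 = 2*θ*S*D^2 := by rw [hS]; ring
      rw [e]
      calc 2*θ*S*D^2 ≤ _ := hRHS
        _ < _ := hMainPoly
        _ ≤ A*W*(θ+3*(s*c)) := hprod
    have huv3 : θ + 3*(s*c) ≤ (u+v)^2 := by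
      have e2 : (u+v)^2 = θ + s*c + 2*(u*v) := by
        have e' : (u+v)^2 = u^2 + v^2 + 2*(u*v) := by ring
        rw [e', hu, hv]
      rw [e2]; linarith only [hsc_uv]
    have hfin : (u-v)^2*(θ+3*(s*c)) ≤ D^2 := by
      calc (u-v)^2*(θ+3*(s*c)) ≤ (u-v)^2*(u+v)^2 :=
            mul_le_mul_of_nonneg_left huv3 (sq_nonneg (u-v))
        _ = D^2 := huv2
    have hfinal : (4*θ*(s*c)*(u-v)^2)*(θ+3*(s*c)) < (A*W)*(θ+3*(s*c)) := by
      calc (4*θ*(s*c)*(u-v)^2)*(θ+3*(s*c)) = (4*θ*(s*c))*((u-v)^2*(θ+3*(s*c))) := by ring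
        _ ≤ (4*θ*(s*c))*D^2 := mul_le_mul_of_nonneg_left hfin
              (mul_nonneg (by linarith only [h0] : (0:ℝ) ≤ 4*θ) hsc.le)
        _ = 4*θ*(s*c)*D^2 := by ring
        _ < A*W*(θ+3*(s*c)) := hbig
        _ = (A*W)*(θ+3*(s*c)) := by ring
    exact lt_of_mul_lt_mul_right hfinal hT3Pos.le

private lemma alg_id1 (u v θ' s c : ℝ) (hupos : 0 < u) (hvpos : 0 < v) (hne : u - v ≠ 0)
    (hu : u^2 = θ') (hv : v^2 = s*c) :
    ((1/(2*u))*s^2 + u*(2*(s*c)) - (((c^2 - s^2)/(2*v))*θ'^2 + v*(2*θ')))*(u - v)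
      - (u*s^2 - v*θ'^2)*(1/(2*u) - (c^2 - s^2)/(2*v))
    = ((s*c - θ'*(c^2 - s^2))*(θ'^2 - s^2) - 4*θ'*(s*c)*(u - v)^2)/(2*(u*v)) := by
  subst hu
  rw [← hv]
  field_simp
  ring

private lemma alg_id2 (u v θ' s c μ : ℝ) (hupos : 0 < u) (hvpos : 0 < v) (hne : u - v ≠ 0)
    (hP : θ'^2 - μ^2 ≠ 0) (hQ : s^2 - μ^2 ≠ 0) (hu : u^2 = θ') (hv : v^2 = s*c) :
    2*θ'/((θ'^2 - μ^2)^2) - 2*(s*c)/((s^2 - μ^2)^2)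
      = (2*(u-v)*(u*(s^2 - μ^2) + v*(θ'^2 - μ^2))/(((θ'^2-μ^2))^2*((s^2-μ^2))^2))
        * ((u*s^2 - v*θ'^2)/(u - v) - μ^2) := by
  subst hu
  rw [← hv]
  rw [div_sub_div _ _ (pow_ne_zero 2 hP) (pow_ne_zero 2 hQ), div_sub' hne, div_mul_div_comm]
  rw [div_eq_div_iff (by positivity) (by have := pow_ne_zero 2 hP; have := pow_ne_zero 2 hQ; positivity)]
  ring

noncomputable def wfun : ℝ → ℝ := fun θ =>
  (Real.sqrt θ * Real.sin θ^2 - Real.sqrt (Real.sin θ*Real.cos θ) * θ^2)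
    / (Real.sqrt θ - Real.sqrt (Real.sin θ*Real.cos θ))

private lemma w_deriv_pos (θ : ℝ) (h0 : 0 < θ) (h2 : θ < π/2) :
    ∃ d, HasDerivAt wfun d θ ∧ 0 < d := by
  have hpi : θ < π := by linarith [Real.pi_pos, h2]
  have hs : 0 < Real.sin θ := Real.sin_pos_of_pos_of_lt_pi h0 hpi
  have hc : 0 < Real.cos θ := Real.cos_pos_of_mem_Ioo ⟨by linarith, h2⟩
  have hsc : 0 < Real.sin θ * Real.cos θ := mul_pos hs hc
  have hscθ : Real.sin θ * Real.cos θ < θ := by nlinarith [Real.sin_lt h0, Real.cos_le_one θ]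
  set u := Real.sqrt θ with hu_def
  set v := Real.sqrt (Real.sin θ*Real.cos θ) with hv_def
  have hupos : 0 < u := Real.sqrt_pos.2 h0
  have hvpos : 0 < v := Real.sqrt_pos.2 hsc
  have huv : v < u := Real.sqrt_lt_sqrt hsc.le hscθ
  have hne : u - v ≠ 0 := by linarith
  have hu : u^2 = θ := Real.sq_sqrt h0.le
  have hv : v^2 = Real.sin θ*Real.cos θ := Real.sq_sqrt hsc.le
  have hsqrt : HasDerivAt (fun x : ℝ => Real.sqrt x) (1/(2*u)) θ :=
    Real.hasDerivAt_sqrt h0.ne'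
  have hsin2 : HasDerivAt (fun x : ℝ => Real.sin x^2) (2*(Real.sin θ*Real.cos θ)) θ := by
    have h := (Real.hasDerivAt_sin θ).pow 2
    have e : (2:ℕ)*Real.sin θ^(2-1)*Real.cos θ = 2*(Real.sin θ*Real.cos θ) := by
      norm_num; ring
    rw [e] at h; exact h
  have hprod : HasDerivAt (fun x : ℝ => Real.sin x*Real.cos x)
      (Real.cos θ^2 - Real.sin θ^2) θ := by
    have h := (Real.hasDerivAt_sin θ).mul (Real.hasDerivAt_cos θ)
    have e : Real.cos θ * Real.cos θ + Real.sin θ * -Real.sin θ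
        = Real.cos θ^2 - Real.sin θ^2 := by ring
    rw [e] at h; exact h
  have hsqv : HasDerivAt (fun x : ℝ => Real.sqrt (Real.sin x*Real.cos x))
      ((Real.cos θ^2 - Real.sin θ^2)/(2*v)) θ :=
    hprod.sqrt hsc.ne'
  have hth2 : HasDerivAt (fun x : ℝ => x^2) (2*θ) θ := by
    have h := (hasDerivAt_id θ).pow 2
    have e : (2:ℕ)*(id θ:ℝ)^(2-1)*1 = 2*θ := by norm_num
    rw [e] at h; exact h
  have hnum : HasDerivAt (fun x : ℝ => Real.sqrt x * Real.sin x^2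
        - Real.sqrt (Real.sin x*Real.cos x)*x^2)
      ((1/(2*u))*Real.sin θ^2 + u*(2*(Real.sin θ*Real.cos θ))
        - (((Real.cos θ^2 - Real.sin θ^2)/(2*v))*θ^2 + v*(2*θ))) θ :=
    (hsqrt.mul hsin2).sub (hsqv.mul hth2)
  have hden : HasDerivAt (fun x : ℝ => Real.sqrt x - Real.sqrt (Real.sin x*Real.cos x))
      (1/(2*u) - (Real.cos θ^2 - Real.sin θ^2)/(2*v)) θ :=
    hsqrt.sub hsqv
  have hw := hnum.div hden hne
  refine ⟨_, hw, ?_⟩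
  have hcrux := crux θ h0 h2
  have hkey : ((1/(2*u))*Real.sin θ^2 + u*(2*(Real.sin θ*Real.cos θ))
        - (((Real.cos θ^2 - Real.sin θ^2)/(2*v))*θ^2 + v*(2*θ)))
        * (u - v)
      - (u * Real.sin θ^2 - v * θ^2)
        * (1/(2*u) - (Real.cos θ^2 - Real.sin θ^2)/(2*v))
      = ((Real.sin θ*Real.cos θ - θ*(Real.cos θ^2 - Real.sin θ^2))*(θ^2 - Real.sin θ^2)
          - 4*θ*(Real.sin θ*Real.cos θ)*(u - v)^2)
        /(2*(u*v)) :=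
    alg_id1 u v θ (Real.sin θ) (Real.cos θ) hupos hvpos hne hu hv
  have hnumpos : 0 < ((1/(2*u))*Real.sin θ^2 + u*(2*(Real.sin θ*Real.cos θ))
        - (((Real.cos θ^2 - Real.sin θ^2)/(2*v))*θ^2 + v*(2*θ)))
        * (u - v)
      - (u * Real.sin θ^2 - v * θ^2)
        * (1/(2*u) - (Real.cos θ^2 - Real.sin θ^2)/(2*v)) := by
    rw [hkey]
    apply div_pos
    · linarith [hcrux]
    · have : 0 < u*v := mul_pos hupos hvpos
      linarith
  apply div_pos hnumpos
  have : 0 < u - v := by linarith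
  positivity

private lemma w_mono : StrictMonoOn wfun (Set.Ioo 0 (π/2)) := by
  apply strictMonoOn_of_deriv_pos (convex_Ioo 0 (π/2))
  · intro x hx
    obtain ⟨d, hd, _⟩ := w_deriv_pos x hx.1 hx.2
    exact hd.continuousAt.continuousWithinAt
  · intro x hx
    rw [interior_Ioo] at hx
    obtain ⟨d, hd, hdpos⟩ := w_deriv_pos x hx.1 hx.2
    rw [hd.deriv]
    exact hdpos

private lemma phi_hasDeriv (μ : ℝ) (θ : ℝ) (hQ : Real.sin θ^2 - μ^2 ≠ 0) (hP : θ^2 - μ^2 ≠ 0) :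
    HasDerivAt (fun θ : ℝ => 1 / (Real.sin θ ^ 2 - μ ^ 2) - 1 / (θ ^ 2 - μ ^ 2))
      (2*θ/((θ^2 - μ^2)^2) - 2*(Real.sin θ*Real.cos θ)/((Real.sin θ^2 - μ^2)^2)) θ := by
  have h1 : HasDerivAt (fun θ:ℝ => Real.sin θ^2 - μ^2) (2*(Real.sin θ*Real.cos θ)) θ := by
    have h := ((Real.hasDerivAt_sin θ).pow 2).sub_const (μ^2)
    have e : (2:ℕ)*Real.sin θ^(2-1)*Real.cos θ = 2*(Real.sin θ*Real.cos θ) := by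
      norm_num; ring
    rw [e] at h; exact h
  have h2 : HasDerivAt (fun θ:ℝ => θ^2 - μ^2) (2*θ) θ := by
    have h := ((hasDerivAt_id θ).pow 2).sub_const (μ^2)
    have e : (2:ℕ)*(id θ:ℝ)^(2-1)*1 = 2*θ := by norm_num
    rw [e] at h; exact h
  have h3 := (h1.inv hQ).sub (h2.inv hP)
  have efun : (fun θ:ℝ => (Real.sin θ^2 - μ^2)⁻¹ - (θ^2 - μ^2)⁻¹)
      = (fun θ:ℝ => 1/(Real.sin θ^2 - μ^2) - 1/(θ^2 - μ^2)) := by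
    funext x; rw [one_div, one_div]
  simp only [Pi.sub_def, Pi.inv_def] at h3
  rw [efun] at h3
  have eval : -(2*(Real.sin θ*Real.cos θ))/(Real.sin θ^2 - μ^2)^2 - -(2*θ)/(θ^2 - μ^2)^2
      = 2*θ/((θ^2 - μ^2)^2) - 2*(Real.sin θ*Real.cos θ)/((Real.sin θ^2 - μ^2)^2) := by
    ring
  rw [eval] at h3; exact h3

private lemma phi_sign (μ θ : ℝ) (hμ0 : 0 < μ) (hμ1 : μ < 1) (hθk : Real.arcsin μ < θ)
    (h2 : θ < π/2) :
    ∃ pc : ℝ, 0 < pc ∧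
      2*θ/((θ^2 - μ^2)^2) - 2*(Real.sin θ*Real.cos θ)/((Real.sin θ^2 - μ^2)^2)
        = pc * (wfun θ - μ^2) := by
  have hks : 0 < Real.arcsin μ := Real.arcsin_pos.2 hμ0
  have h0 : 0 < θ := lt_trans hks hθk
  have hpi : θ < π := by linarith [Real.pi_pos]
  have hs : 0 < Real.sin θ := Real.sin_pos_of_pos_of_lt_pi h0 hpi
  have hc : 0 < Real.cos θ := Real.cos_pos_of_mem_Ioo ⟨by linarith, h2⟩
  have hsc : 0 < Real.sin θ*Real.cos θ := mul_pos hs hc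
  have hμs : μ < Real.sin θ := by
    have hmem1 : Real.arcsin μ ∈ Set.Icc (-(π/2)) (π/2) := Real.arcsin_mem_Icc μ
    have hmem2 : θ ∈ Set.Icc (-(π/2)) (π/2) := ⟨by linarith [hmem1.1, hks], h2.le⟩
    have := Real.strictMonoOn_sin hmem1 hmem2 hθk
    rwa [Real.sin_arcsin (by linarith) hμ1.le] at this
  have hμθ : μ < θ := by
    have h1 : Real.sin (Real.arcsin μ) ≤ Real.arcsin μ := by
      have := Real.sin_lt hks; linarith
    rw [Real.sin_arcsin (by linarith) hμ1.le] at h1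
    linarith
  have hQ : 0 < Real.sin θ^2 - μ^2 := by nlinarith
  have hP : 0 < θ^2 - μ^2 := by nlinarith
  have hscθ : Real.sin θ*Real.cos θ < θ := by nlinarith [Real.sin_lt h0, Real.cos_le_one θ]
  set u := Real.sqrt θ with hu_def
  set v := Real.sqrt (Real.sin θ*Real.cos θ) with hv_def
  have hu : u^2 = θ := Real.sq_sqrt h0.le
  have hv : v^2 = Real.sin θ*Real.cos θ := Real.sq_sqrt hsc.le
  have hupos : 0 < u := Real.sqrt_pos.2 h0
  have hvpos : 0 < v := Real.sqrt_pos.2 hsc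
  have huv : v < u := Real.sqrt_lt_sqrt hsc.le hscθ
  have hne : u - v ≠ 0 := by linarith
  refine ⟨2*(u-v)*(u*(Real.sin θ^2 - μ^2) + v*(θ^2 - μ^2))/(((θ^2-μ^2))^2*((Real.sin θ^2-μ^2))^2),
    ?_, ?_⟩
  · apply div_pos
    · have hpos1 : 0 < u*(Real.sin θ^2 - μ^2) + v*(θ^2 - μ^2) := by
        have := mul_pos hupos hQ
        have := mul_pos hvpos hP
        linarith
      have : 0 < u - v := by linarith
      positivity
    · positivity
  · show _ = _ * (wfun θ - μ^2)
    have ewfun : wfun θ = (u * Real.sin θ^2 - v * θ^2)/(u - v) := rfl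
    rw [ewfun]
    exact alg_id2 u v θ (Real.sin θ) (Real.cos θ) μ hupos hvpos hne hP.ne' hQ.ne' hu hv

theorem phie_no_local_max (μ : ℝ) (hμ0 : 0 < μ) (hμ1 : μ < 1) :
    (∀ θ₁ ∈ Set.Ioo (Real.arcsin μ) (π / 2), ∀ θ₂ ∈ Set.Ioo (Real.arcsin μ) (π / 2),
        deriv (fun θ : ℝ => 1 / ((Real.sin θ) ^ 2 - μ ^ 2) - 1 / (θ ^ 2 - μ ^ 2)) θ₁ = 0 →
        deriv (fun θ : ℝ => 1 / ((Real.sin θ) ^ 2 - μ ^ 2) - 1 / (θ ^ 2 - μ ^ 2)) θ₂ = 0 →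
        θ₁ = θ₂) ∧
    (∀ θ ∈ Set.Ioo (Real.arcsin μ) (π / 2),
        deriv (fun θ : ℝ => 1 / ((Real.sin θ) ^ 2 - μ ^ 2) - 1 / (θ ^ 2 - μ ^ 2)) θ = 0 →
        IsLocalMin (fun θ : ℝ => 1 / ((Real.sin θ) ^ 2 - μ ^ 2) - 1 / (θ ^ 2 - μ ^ 2)) θ) ∧
    (∀ θ ∈ Set.Ioo (Real.arcsin μ) (π / 2),
        ¬ IsLocalMax (fun θ : ℝ => 1 / ((Real.sin θ) ^ 2 - μ ^ 2) - 1 / (θ ^ 2 - μ ^ 2)) θ) := by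
  set F : ℝ → ℝ := fun θ : ℝ => 1 / ((Real.sin θ) ^ 2 - μ ^ 2) - 1 / (θ ^ 2 - μ ^ 2) with hF_def
  set θk := Real.arcsin μ with hθk_def
  have hks : 0 < θk := Real.arcsin_pos.2 hμ0
  have hkpi : θk < π/2 := Real.arcsin_lt_pi_div_two.2 hμ1
  -- basic facts for θ in the interval
  have hbasic : ∀ θ ∈ Set.Ioo θk (π/2),
      0 < θ ∧ 0 < Real.sin θ^2 - μ^2 ∧ 0 < θ^2 - μ^2 := by
    intro θ hθ
    have h0 : 0 < θ := lt_trans hks hθ.1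
    have hpi : θ < π := by linarith [Real.pi_pos, hθ.2]
    have hμs : μ < Real.sin θ := by
      have hmem1 : θk ∈ Set.Icc (-(π/2)) (π/2) := Real.arcsin_mem_Icc μ
      have hmem2 : θ ∈ Set.Icc (-(π/2)) (π/2) := ⟨by linarith [hmem1.1], hθ.2.le⟩
      have := Real.strictMonoOn_sin hmem1 hmem2 hθ.1
      rwa [Real.sin_arcsin (by linarith) hμ1.le] at this
    have hμθ : μ < θ := by
      have h1 : Real.sin θk ≤ θk := (Real.sin_lt hks).le
      rw [Real.sin_arcsin (by linarith) hμ1.le] at h1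
      linarith [hθ.1]
    refine ⟨h0, by nlinarith, by nlinarith⟩
  have hDeriv : ∀ θ ∈ Set.Ioo θk (π/2), HasDerivAt F
      (2*θ/((θ^2 - μ^2)^2) - 2*(Real.sin θ*Real.cos θ)/((Real.sin θ^2 - μ^2)^2)) θ := by
    intro θ hθ
    obtain ⟨h0, hQ, hP⟩ := hbasic θ hθ
    exact phi_hasDeriv μ θ hQ.ne' hP.ne'
  have hSign : ∀ θ ∈ Set.Ioo θk (π/2), ∃ pc : ℝ, 0 < pc ∧
      2*θ/((θ^2 - μ^2)^2) - 2*(Real.sin θ*Real.cos θ)/((Real.sin θ^2 - μ^2)^2)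
        = pc * (wfun θ - μ^2) := by
    intro θ hθ
    exact phi_sign μ θ hμ0 hμ1 hθ.1 hθ.2
  have hsub : Set.Ioo θk (π/2) ⊆ Set.Ioo 0 (π/2) := fun x hx => ⟨lt_trans hks hx.1, hx.2⟩
  -- critical point characterization
  have hCrit : ∀ θ ∈ Set.Ioo θk (π/2), deriv F θ = 0 → wfun θ = μ^2 := by
    intro θ hθ hd
    obtain ⟨pc, hpc, he⟩ := hSign θ hθ
    have hd' := (hDeriv θ hθ).deriv
    rw [hd, he] at hd'
    rcases mul_eq_zero.1 hd'.symm with h|h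
    · exact absurd h hpc.ne'
    · linarith [sub_eq_zero.1 h]
  -- sign of derivative away from critical point
  have hNeg : ∀ θc ∈ Set.Ioo θk (π/2), wfun θc = μ^2 →
      ∀ x ∈ Set.Ioo θk θc, deriv F x < 0 := by
    intro θc hθc hwc x hx
    have hxI : x ∈ Set.Ioo θk (π/2) := ⟨hx.1, lt_trans hx.2 hθc.2⟩
    obtain ⟨pc, hpc, he⟩ := hSign x hxI
    have hw : wfun x < μ^2 := by
      rw [← hwc]
      exact w_mono (hsub hxI) (hsub hθc) hx.2
    rw [(hDeriv x hxI).deriv, he]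
    exact mul_neg_of_pos_of_neg hpc (by linarith)
  have hPos : ∀ θc ∈ Set.Ioo θk (π/2), wfun θc = μ^2 →
      ∀ x ∈ Set.Ioo θc (π/2), deriv F x > 0 := by
    intro θc hθc hwc x hx
    have hxI : x ∈ Set.Ioo θk (π/2) := ⟨lt_trans hθc.1 hx.1, hx.2⟩
    obtain ⟨pc, hpc, he⟩ := hSign x hxI
    have hw : μ^2 < wfun x := by
      rw [← hwc]
      exact w_mono (hsub hθc) (hsub hxI) hx.1
    rw [(hDeriv x hxI).deriv, he]
    exact mul_pos hpc (by linarith)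
  have hCont : ∀ s ⊆ Set.Ioo θk (π/2), ContinuousOn F s := by
    intro s hs x hx
    exact ((hDeriv x (hs hx)).continuousAt).continuousWithinAt
  -- strict antitone before / monotone after a critical point
  have hAnti : ∀ θc ∈ Set.Ioo θk (π/2), wfun θc = μ^2 →
      StrictAntiOn F (Set.Ioc θk θc) := by
    intro θc hθc hwc
    apply strictAntiOn_of_deriv_neg (convex_Ioc θk θc)
    · exact hCont _ (fun x hx => ⟨hx.1, lt_of_le_of_lt hx.2 hθc.2⟩)
    · intro x hx
      rw [interior_Ioc] at hx
      exact hNeg θc hθc hwc x hx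
  have hMonoR : ∀ θc ∈ Set.Ioo θk (π/2), wfun θc = μ^2 →
      StrictMonoOn F (Set.Ico θc (π/2)) := by
    intro θc hθc hwc
    apply strictMonoOn_of_deriv_pos (convex_Ico θc (π/2))
    · exact hCont _ (fun x hx => ⟨lt_of_lt_of_le hθc.1 hx.1, hx.2⟩)
    · intro x hx
      rw [interior_Ico] at hx
      exact hPos θc hθc hwc x hx
  refine ⟨?_, ?_, ?_⟩
  · -- uniqueness
    intro θ₁ h₁ θ₂ h₂ hd₁ hd₂
    have hw₁ := hCrit θ₁ h₁ hd₁
    have hw₂ := hCrit θ₂ h₂ hd₂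
    exact w_mono.injOn (hsub h₁) (hsub h₂) (by rw [hw₁, hw₂])
  · -- local min
    intro θc hθc hd
    have hwc := hCrit θc hθc hd
    have hanti := hAnti θc hθc hwc
    have hmono := hMonoR θc hθc hwc
    have hnb : Set.Ioo θk (π/2) ∈ nhds θc := Ioo_mem_nhds hθc.1 hθc.2
    apply Filter.eventually_of_mem hnb
    intro y hy
    rcases lt_trichotomy y θc with h|h|h
    · exact (hanti ⟨hy.1, h.le⟩ ⟨hθc.1, le_refl θc⟩ h).le
    · exact le_of_eq (by rw [h])
    · exact (hmono ⟨le_refl θc, hθc.2⟩ ⟨h.le, hy.2⟩ h).le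
  · -- no local max
    intro θ0 hθ0 hmax
    have hd0 : deriv F θ0 = 0 := hmax.deriv_eq_zero
    have hwc := hCrit θ0 hθ0 hd0
    have hanti := hAnti θ0 hθ0 hwc
    have hcl : θ0 ∈ closure (Set.Ioo θk θ0) := by
      rw [closure_Ioo (ne_of_lt hθ0.1)]
      exact ⟨hθ0.1.le, le_refl θ0⟩
    obtain ⟨y, hyU, hyI⟩ := mem_closure_iff_nhds.1 hcl _ hmax
    have : F θ0 < F y := hanti ⟨hyI.1, hyI.2.le⟩ ⟨hθ0.1, le_refl θ0⟩ hyI.2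
    exact absurd hyU (by simp only [Set.mem_setOf_eq]; linarith)
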